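/- arXiv:1501.06681 — 6 statements merged into one kernel-verified Lean document; each statement's English description precedes it below -/
import Mathlib

section
/- If a graph G on n ≥ 4 vertices has no universal line, then G induces at least n distinct lines. -/
def gline {V : Type*} (G : SimpleGraph V) [DecidableRel G.Adj] (a b : V) : Set V :=
  if G.Adj a b then {a, b} ∪ {c | G.Adj a c ∧ G.Adj b c} else {a, b}

def glines {V : Type*} (G : SimpleGraph V) [DecidableRel G.Adj] : Set (Set V) :=
  {s | ∃ a b, a ≠ b ∧ s = gline G a b}

set_option linter.unusedSectionVars false
section helpers
variable {V : Type*} (G : SimpleGraph V) [DecidableRel G.Adj] {a b c : V}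

lemma gline_mem_glines (h : a ≠ b) : gline G a b ∈ glines G := ⟨a, b, h, rfl⟩

lemma left_mem_gline : a ∈ gline G a b := by
  unfold gline; split <;> simp

lemma right_mem_gline : b ∈ gline G a b := by
  unfold gline; split <;> simp

lemma gline_of_not_adj (h : ¬ G.Adj a b) : gline G a b = {a, b} := if_neg h

lemma mem_gline_iff_of_adj (hab : G.Adj a b) :
    c ∈ gline G a b ↔ c = a ∨ c = b ∨ (G.Adj a c ∧ G.Adj b c) := by
  unfold gline
  rw [if_pos hab]
  simp [Set.mem_union, Set.mem_insert_iff, or_assoc]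

lemma compl_out_mk (c : Gᶜ.ConnectedComponent) :
    Gᶜ.connectedComponentMk (Quot.out c) = c := Quot.out_eq c

lemma reach_out (v : V) :
    Gᶜ.Reachable v (Quot.out (Gᶜ.connectedComponentMk v)) :=
  SimpleGraph.ConnectedComponent.exact (compl_out_mk G _).symm

end helpers

theorem stmt_3 {V : Type*} [Fintype V] (G : SimpleGraph V) [DecidableRel G.Adj]
    (n : ℕ) (hn : Fintype.card V = n) (h4 : 4 ≤ n)
    (huniv : ∀ a b : V, a ≠ b → gline G a b ≠ Set.univ) :
    n ≤ (glines G).ncard := by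
  classical
  suffices hinj : ∃ f : V → Set V, Function.Injective f ∧ ∀ v, f v ∈ glines G by
    obtain ⟨f, hf, hmem⟩ := hinj
    have hsub : Set.range f ⊆ glines G := by rintro s ⟨v, rfl⟩; exact hmem v
    have h1 := Set.ncard_le_ncard hsub (Set.toFinite _)
    have h2 : (Set.range f).ncard = n := by
      rw [← Set.image_univ, Set.ncard_image_of_injective _ hf, Set.ncard_univ,
        Nat.card_eq_fintype_card, hn]
    omega
  by_cases hE : ∃ p q, G.Adj p q
  · obtain ⟨p, q, hpq⟩ := hE
    have hGadj : ∀ {x y : V}, x ≠ y → ¬ Gᶜ.Adj x y → G.Adj x y := by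
      intro x y hne hnc
      by_contra hg
      exact hnc ((G.compl_adj x y).mpr ⟨hne, hg⟩)
    have hnG : ∀ {x y : V}, Gᶜ.Adj x y → ¬ G.Adj x y := fun h => ((G.compl_adj _ _).mp h).2
    have hdiff : ∀ {x y : V},
        Gᶜ.connectedComponentMk x ≠ Gᶜ.connectedComponentMk y → G.Adj x y := by
      intro x y hne
      refine hGadj (fun h => hne (by rw [h])) (fun h => hne ?_)
      exact SimpleGraph.ConnectedComponent.connectedComponentMk_eq_of_adj h
    have hiso2 : ∀ u w : V, u ≠ w → (∀ z, ¬ Gᶜ.Adj u z) → (∀ z, ¬ Gᶜ.Adj w z) → False := by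
      intro u w hne hu hw
      apply huniv u w hne
      have huw : G.Adj u w := hGadj hne (hu w)
      ext x
      simp only [Set.mem_univ, iff_true]
      rw [mem_gline_iff_of_adj G huw]
      by_cases hxu : x = u
      · exact Or.inl hxu
      by_cases hxw : x = w
      · exact Or.inr (Or.inl hxw)
      · refine Or.inr (Or.inr ⟨hGadj (fun h => hxu h.symm) (hu x), hGadj (fun h => hxw h.symm) (hw x)⟩)
    -- step towards root
    have hstepE : ∀ v : V, v ≠ Quot.out (Gᶜ.connectedComponentMk v) →
        ∃ w, Gᶜ.Adj v w ∧ Gᶜ.dist w (Quot.out (Gᶜ.connectedComponentMk v)) <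
          Gᶜ.dist v (Quot.out (Gᶜ.connectedComponentMk v)) := by
      intro v hv
      obtain ⟨ρ, hρ⟩ : ∃ ρ, Quot.out (Gᶜ.connectedComponentMk v) = ρ := ⟨_, rfl⟩
      rw [hρ] at hv ⊢
      have hr : Gᶜ.Reachable v ρ := hρ ▸ reach_out G v
      have hpos : 0 < Gᶜ.dist v ρ := hr.pos_dist_of_ne hv
      obtain ⟨pw, hpw⟩ := SimpleGraph.exists_walk_of_dist_ne_zero hpos.ne'
      cases pw with
      | nil => exact absurd rfl hv
      | cons hadj qw =>
        refine ⟨_, hadj, ?_⟩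
        have hd := SimpleGraph.dist_le qw
        rw [SimpleGraph.Walk.length_cons] at hpw
        omega
    choose step hstep1 hstep2 using hstepE
    -- the component line assignment
    have hclaim : ∃ A B : Gᶜ.ConnectedComponent → V, (∀ c, G.Adj (A c) (B c)) ∧
        Function.Injective (fun c => gline G (A c) (B c)) := by
      by_cases hiso : ∃ u, ∀ z, ¬ Gᶜ.Adj u z
      · -- one isolated vertex u
        obtain ⟨u, hu⟩ := hiso
        have hxE : ∃ x y, Gᶜ.Adj x y := by
          by_contra hc
          push_neg at hc
          have h2 : ∃ w : V, w ≠ u := by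
            have h1 : 1 < Fintype.card V := by omega
            obtain ⟨a, b, hab⟩ := Fintype.exists_pair_of_one_lt_card h1
            by_cases h : a = u
            · exact ⟨b, by rw [← h]; exact hab.symm⟩
            · exact ⟨a, h⟩
          obtain ⟨w, hw⟩ := h2
          exact hiso2 u w hw.symm hu (hc w)
        obtain ⟨xs, ys, hxy⟩ := hxE
        have hxu : xs ≠ u := fun h => hu ys (h ▸ hxy)
        have hyu : ys ≠ u := fun h => hu xs (h ▸ hxy.symm)
        have hCyx : Gᶜ.connectedComponentMk ys = Gᶜ.connectedComponentMk xs :=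
          SimpleGraph.ConnectedComponent.connectedComponentMk_eq_of_adj hxy.symm
        have hureach : ∀ w, Gᶜ.Reachable u w → u = w := by
          intro w hr
          refine hr.elim (fun pw => ?_)
          cases pw with
          | nil => rfl
          | cons hadj _ => exact absurd hadj (hu _)
        have hcu_ne : Gᶜ.connectedComponentMk u ≠ Gᶜ.connectedComponentMk xs := fun h =>
          hxu (hureach xs (SimpleGraph.ConnectedComponent.exact h)).symm
        -- z selection for components other than that of u
        have hzE : ∀ c : Gᶜ.ConnectedComponent, c ≠ Gᶜ.connectedComponentMk u →
            ∃ w, Gᶜ.Adj (Quot.out c) w := by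
          intro c hc
          by_contra hcon
          push_neg at hcon
          refine hiso2 u (Quot.out c) (fun h => hc ?_) hu hcon
          rw [← compl_out_mk G c, ← h]
        choose zf hzf using hzE
        have hzmk : ∀ (c) (hc : c ≠ Gᶜ.connectedComponentMk u),
            Gᶜ.connectedComponentMk (zf c hc) = c := by
          intro c hc
          exact (SimpleGraph.ConnectedComponent.connectedComponentMk_eq_of_adj
            (hzf c hc)).symm.trans (compl_out_mk G c)
        have hAuy : G.Adj u ys := hGadj (fun h => hyu h.symm) (hu ys)
        have hAxu : G.Adj xs u := hGadj hxu (fun h => hu xs h.symm)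
        -- key distinctness facts
        have hOU : ∀ (c) (_ : c ≠ Gᶜ.connectedComponentMk u) (_ : c ≠ Gᶜ.connectedComponentMk xs),
            gline G (Quot.out c) xs ≠ gline G u ys := by
          intro c hc1 hc2 heq
          have hx1 : xs ∈ gline G (Quot.out c) xs := right_mem_gline G
          rw [heq, mem_gline_iff_of_adj G hAuy] at hx1
          rcases hx1 with h | h | ⟨_, h⟩
          · exact hxu h
          · exact hxy.ne h
          · exact hnG hxy.symm h
        have hSU : gline G xs u ≠ gline G u ys := by
          intro heq
          have hx1 : xs ∈ gline G xs u := left_mem_gline G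
          rw [heq, mem_gline_iff_of_adj G hAuy] at hx1
          rcases hx1 with h | h | ⟨_, h⟩
          · exact hxu h
          · exact hxy.ne h
          · exact hnG hxy.symm h
        have hznx : ∀ (c) (hc1 : c ≠ Gᶜ.connectedComponentMk u)
            (_ : c ≠ Gᶜ.connectedComponentMk xs), zf c hc1 ∉ gline G (Quot.out c) xs := by
          intro c hc1 hc2 hmem
          have hadj : G.Adj (Quot.out c) xs := hdiff (by rw [compl_out_mk G c]; exact hc2)
          rw [mem_gline_iff_of_adj G hadj] at hmem
          rcases hmem with h | h | ⟨h, _⟩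
          · exact (hzf c hc1).ne' h
          · exact hc2 (by rw [← hzmk c hc1, h])
          · exact hnG (hzf c hc1) h
        have hOS : ∀ (c) (hc1 : c ≠ Gᶜ.connectedComponentMk u)
            (_ : c ≠ Gᶜ.connectedComponentMk xs),
            gline G (Quot.out c) xs ≠ gline G xs u := by
          intro c hc1 hc2 heq
          apply hznx c hc1 hc2
          rw [heq, mem_gline_iff_of_adj G hAxu]
          have hz1 : G.Adj xs (zf c hc1) := hdiff (by rw [hzmk c hc1]; exact fun h => hc2 h.symm)
          have hz2 : G.Adj u (zf c hc1) := by
            refine hGadj (fun h => hc1 ?_) (hu _)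
            rw [← hzmk c hc1, ← h]
          exact Or.inr (Or.inr ⟨hz1, hz2⟩)
        have hOO : ∀ (c c') (hc1 : c ≠ Gᶜ.connectedComponentMk u)
            (hc2 : c ≠ Gᶜ.connectedComponentMk xs) (hc1' : c' ≠ Gᶜ.connectedComponentMk u)
            (hc2' : c' ≠ Gᶜ.connectedComponentMk xs) (_ : c ≠ c'),
            gline G (Quot.out c) xs ≠ gline G (Quot.out c') xs := by
          intro c c' hc1 hc2 hc1' hc2' hne heq
          apply hznx c hc1 hc2
          have hadj' : G.Adj (Quot.out c') xs := hdiff (by rw [compl_out_mk G c']; exact hc2')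
          rw [heq, mem_gline_iff_of_adj G hadj']
          have hz1 : G.Adj (Quot.out c') (zf c hc1) := hdiff (by
            rw [compl_out_mk G c', hzmk c hc1]; exact fun h => hne h.symm)
          have hz2 : G.Adj xs (zf c hc1) := hdiff (by rw [hzmk c hc1]; exact fun h => hc2 h.symm)
          exact Or.inr (Or.inr ⟨hz1, hz2⟩)
        refine ⟨fun c => if c = Gᶜ.connectedComponentMk u then u
            else if c = Gᶜ.connectedComponentMk xs then xs else Quot.out c,
          fun c => if c = Gᶜ.connectedComponentMk u then ys
            else if c = Gᶜ.connectedComponentMk xs then u else xs, ?_, ?_⟩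
        · intro c
          by_cases h1 : c = Gᶜ.connectedComponentMk u
          · simp only [if_pos h1]; exact hAuy
          by_cases h2 : c = Gᶜ.connectedComponentMk xs
          · simp only [if_neg h1, if_pos h2]; exact hAxu
          · simp only [if_neg h1, if_neg h2]
            exact hdiff (by rw [compl_out_mk G c]; exact h2)
        · intro c c' heq
          simp only at heq
          by_cases h1 : c = Gᶜ.connectedComponentMk u <;>
            by_cases h1' : c' = Gᶜ.connectedComponentMk u
          · rw [h1, h1']
          · by_cases h2' : c' = Gᶜ.connectedComponentMk xs
            · simp only [if_pos h1, if_neg h1', if_pos h2'] at heq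
              exact absurd heq.symm hSU
            · simp only [if_pos h1, if_neg h1', if_neg h2'] at heq
              exact absurd heq.symm (hOU c' h1' h2')
          · by_cases h2 : c = Gᶜ.connectedComponentMk xs
            · simp only [if_neg h1, if_pos h1', if_pos h2] at heq
              exact absurd heq hSU
            · simp only [if_neg h1, if_pos h1', if_neg h2] at heq
              exact absurd heq (hOU c h1 h2)
          · by_cases h2 : c = Gᶜ.connectedComponentMk xs <;>
              by_cases h2' : c' = Gᶜ.connectedComponentMk xs
            · rw [h2, h2']
            · simp only [if_neg h1, if_neg h1', if_pos h2, if_neg h2'] at heq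
              exact absurd heq.symm (hOS c' h1' h2')
            · simp only [if_neg h1, if_neg h1', if_neg h2, if_pos h2'] at heq
              exact absurd heq (hOS c h1 h2)
            · simp only [if_neg h1, if_neg h1', if_neg h2, if_neg h2'] at heq
              by_contra hne
              exact hOO c c' h1 h2 h1' h2' hne heq
      · -- no isolated vertex
        push_neg at hiso
        have hne0 : Nonempty V := Fintype.card_pos_iff.mp (by omega)
        obtain ⟨xs⟩ := hne0
        obtain ⟨ys, hxy⟩ := hiso xs
        have hCyx : Gᶜ.connectedComponentMk ys = Gᶜ.connectedComponentMk xs :=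
          SimpleGraph.ConnectedComponent.connectedComponentMk_eq_of_adj hxy.symm
        by_cases hone : ∀ w, Gᶜ.connectedComponentMk w = Gᶜ.connectedComponentMk xs
        · refine ⟨fun _ => p, fun _ => q, fun _ => hpq, ?_⟩
          intro c c' _
          have hall : ∀ c : Gᶜ.ConnectedComponent, c = Gᶜ.connectedComponentMk xs :=
            fun c => SimpleGraph.ConnectedComponent.ind hone c
          rw [hall c, hall c']
        · push_neg at hone
          obtain ⟨w0, hw0⟩ := hone
          choose zf hzf using fun c : Gᶜ.ConnectedComponent => hiso (Quot.out c)
          have hzmk : ∀ c : Gᶜ.ConnectedComponent, Gᶜ.connectedComponentMk (zf c) = c := by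
            intro c
            exact (SimpleGraph.ConnectedComponent.connectedComponentMk_eq_of_adj
              (hzf c)).symm.trans (compl_out_mk G c)
          have hznx : ∀ (c) (_ : c ≠ Gᶜ.connectedComponentMk xs),
              zf c ∉ gline G (Quot.out c) xs := by
            intro c hc2 hmem
            have hadj : G.Adj (Quot.out c) xs := hdiff (by rw [compl_out_mk G c]; exact hc2)
            rw [mem_gline_iff_of_adj G hadj] at hmem
            rcases hmem with h | h | ⟨h, _⟩
            · exact (hzf c).ne' h
            · exact hc2 (by rw [← hzmk c, h])
            · exact hnG (hzf c) h
          have hAyd : G.Adj ys (Quot.out (Gᶜ.connectedComponentMk w0)) := by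
            refine hdiff ?_
            rw [hCyx, compl_out_mk G]
            exact fun h => hw0 h.symm
          have hOS : ∀ (c) (_ : c ≠ Gᶜ.connectedComponentMk xs)
              (_ : c ≠ Gᶜ.connectedComponentMk w0),
              gline G (Quot.out c) xs ≠ gline G ys (Quot.out (Gᶜ.connectedComponentMk w0)) := by
            intro c hc2 hcd heq
            apply hznx c hc2
            rw [heq, mem_gline_iff_of_adj G hAyd]
            have hz1 : G.Adj ys (zf c) := hdiff (by rw [hCyx, hzmk c]; exact fun h => hc2 h.symm)
            have hz2 : G.Adj (Quot.out (Gᶜ.connectedComponentMk w0)) (zf c) := by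
              apply hdiff
              rw [compl_out_mk G, hzmk c]
              exact fun h => hcd h.symm
            exact Or.inr (Or.inr ⟨hz1, hz2⟩)
          have hDS : gline G (Quot.out (Gᶜ.connectedComponentMk w0)) xs ≠
              gline G ys (Quot.out (Gᶜ.connectedComponentMk w0)) := by
            intro heq
            have hx1 : xs ∈ gline G (Quot.out (Gᶜ.connectedComponentMk w0)) xs :=
              right_mem_gline G
            rw [heq, mem_gline_iff_of_adj G hAyd] at hx1
            rcases hx1 with h | h | ⟨h, _⟩
            · exact hxy.ne h
            · apply hw0
              rw [← compl_out_mk G (Gᶜ.connectedComponentMk w0), ← h]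
            · exact hnG hxy.symm h
          have hOO : ∀ (c c') (_ : c ≠ Gᶜ.connectedComponentMk xs)
              (_ : c' ≠ Gᶜ.connectedComponentMk xs) (_ : c ≠ c'),
              gline G (Quot.out c) xs ≠ gline G (Quot.out c') xs := by
            intro c c' hc2 hc2' hne heq
            apply hznx c hc2
            have hadj' : G.Adj (Quot.out c') xs := hdiff (by rw [compl_out_mk G c']; exact hc2')
            rw [heq, mem_gline_iff_of_adj G hadj']
            have hz1 : G.Adj (Quot.out c') (zf c) := hdiff (by
              rw [compl_out_mk G c', hzmk c]; exact fun h => hne h.symm)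
            have hz2 : G.Adj xs (zf c) := hdiff (by rw [hzmk c]; exact fun h => hc2 h.symm)
            exact Or.inr (Or.inr ⟨hz1, hz2⟩)
          refine ⟨fun c => if c = Gᶜ.connectedComponentMk xs then ys else Quot.out c,
            fun c => if c = Gᶜ.connectedComponentMk xs then Quot.out (Gᶜ.connectedComponentMk w0)
              else xs, ?_, ?_⟩
          · intro c
            by_cases h2 : c = Gᶜ.connectedComponentMk xs
            · simp only [if_pos h2]; exact hAyd
            · simp only [if_neg h2]
              exact hdiff (by rw [compl_out_mk G c]; exact h2)
          · intro c c' heq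
            simp only at heq
            by_cases h2 : c = Gᶜ.connectedComponentMk xs <;>
              by_cases h2' : c' = Gᶜ.connectedComponentMk xs
            · rw [h2, h2']
            · simp only [if_pos h2, if_neg h2'] at heq
              by_cases hcd : c' = Gᶜ.connectedComponentMk w0
              · rw [hcd] at heq
                exact absurd heq.symm hDS
              · exact absurd heq.symm (hOS c' h2' hcd)
            · simp only [if_neg h2, if_pos h2'] at heq
              by_cases hcd : c = Gᶜ.connectedComponentMk w0
              · rw [hcd] at heq
                exact absurd heq hDS
              · exact absurd heq (hOS c h2 hcd)
            · simp only [if_neg h2, if_neg h2'] at heq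
              by_contra hne
              exact hOO c c' h2 h2' hne heq
    -- assemble the injection
    obtain ⟨A, B, hAB, hABinj⟩ := hclaim
    have hmixed : ∀ (v' : V) (h : ¬ v' = Quot.out (Gᶜ.connectedComponentMk v')) (a b : V),
        G.Adj a b → gline G a b ≠ gline G v' (step v' h) := by
      intro v' h a b hab heq
      have hna : ¬ G.Adj v' (step v' h) := hnG (hstep1 v' h)
      rw [gline_of_not_adj G hna] at heq
      have ha : a ∈ ({v', step v' h} : Set V) := heq ▸ left_mem_gline G
      have hb : b ∈ ({v', step v' h} : Set V) := heq ▸ right_mem_gline G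
      simp only [Set.mem_insert_iff, Set.mem_singleton_iff] at ha hb
      rcases ha with rfl | rfl <;> rcases hb with rfl | rfl
      · exact hab.ne rfl
      · exact hna hab
      · exact hna hab.symm
      · exact hab.ne rfl
    refine ⟨fun v => if h : v = Quot.out (Gᶜ.connectedComponentMk v) then
        gline G (A (Gᶜ.connectedComponentMk v)) (B (Gᶜ.connectedComponentMk v))
      else gline G v (step v h), ?_, ?_⟩
    · intro v v' heq
      by_cases hv : v = Quot.out (Gᶜ.connectedComponentMk v) <;>
        by_cases hv' : v' = Quot.out (Gᶜ.connectedComponentMk v')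
      · simp only [dif_pos hv, dif_pos hv'] at heq
        have hcc := hABinj heq
        rw [hv, hv']
        exact congrArg Quot.out hcc
      · simp only [dif_pos hv, dif_neg hv'] at heq
        exact absurd heq (hmixed v' hv' _ _ (hAB _))
      · simp only [dif_neg hv, dif_pos hv'] at heq
        exact absurd heq.symm (hmixed v hv _ _ (hAB _))
      · simp only [dif_neg hv, dif_neg hv'] at heq
        by_cases hvv : v = v'
        · exact hvv
        have hna : ¬ G.Adj v (step v hv) := hnG (hstep1 v hv)
        have hna' : ¬ G.Adj v' (step v' hv') := hnG (hstep1 v' hv')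
        rw [gline_of_not_adj G hna, gline_of_not_adj G hna', Set.pair_eq_pair_iff] at heq
        rcases heq with ⟨h1, _⟩ | ⟨h1, h2⟩
        · exact h1
        · exfalso
          have hadj : Gᶜ.Adj v v' := h2 ▸ hstep1 v hv
          have hC : Gᶜ.connectedComponentMk v = Gᶜ.connectedComponentMk v' :=
            SimpleGraph.ConnectedComponent.connectedComponentMk_eq_of_adj hadj
          have d1 := hstep2 v hv
          have d2 := hstep2 v' hv'
          rw [h2] at d1
          rw [← h1] at d2
          rw [hC] at d1
          omega
    · intro v
      by_cases hv : v = Quot.out (Gᶜ.connectedComponentMk v)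
      · simp only [dif_pos hv]; exact gline_mem_glines G (hAB _).ne
      · simp only [dif_neg hv]; exact gline_mem_glines G (hstep1 v hv).ne
  · -- G has no edges
    push_neg at hE
    have h3 : ∃ a0 a1 a2 : V, a0 ≠ a1 ∧ a0 ≠ a2 ∧ a1 ≠ a2 := by
      have h1 : 1 < Fintype.card V := by omega
      obtain ⟨a0, a1, h01⟩ := Fintype.exists_pair_of_one_lt_card h1
      have : ∃ a2, a2 ≠ a0 ∧ a2 ≠ a1 := by
        by_contra hc
        push_neg at hc
        have hsubs : (Finset.univ : Finset V) ⊆ {a0, a1} := by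
          intro x _
          simp only [Finset.mem_insert, Finset.mem_singleton]
          by_cases h : x = a0
          · exact Or.inl h
          · exact Or.inr (hc x h)
        have hcard := Finset.card_le_card hsubs
        have : ({a0, a1} : Finset V).card ≤ 2 := Finset.card_insert_le _ _ |>.trans (by simp)
        rw [Finset.card_univ, hn] at hcard
        omega
      obtain ⟨a2, h20, h21⟩ := this
      exact ⟨a0, a1, a2, h01, fun h => h20 h.symm, fun h => h21 h.symm⟩
    obtain ⟨a0, a1, a2, h01, h02, h12⟩ := h3
    refine ⟨fun v => if v = a0 then gline G a1 a2 else gline G v a0, ?_, ?_⟩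
    · intro v w heq
      simp only at heq
      by_cases hv : v = a0 <;> by_cases hw : w = a0
      · rw [hv, hw]
      · simp only [if_pos hv, if_neg hw] at heq
        rw [gline_of_not_adj G (hE a1 a2),
          gline_of_not_adj G (hE w a0), Set.pair_eq_pair_iff] at heq
        rcases heq with ⟨_, h⟩ | ⟨h, _⟩
        · exact absurd h.symm h02
        · exact absurd h.symm h01
      · simp only [if_neg hv, if_pos hw] at heq
        rw [gline_of_not_adj G (hE a1 a2),
          gline_of_not_adj G (hE v a0), Set.pair_eq_pair_iff] at heq
        rcases heq with ⟨_, h⟩ | ⟨_, h⟩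
        · exact absurd h h02
        · exact absurd h h01
      · simp only [if_neg hv, if_neg hw] at heq
        rw [gline_of_not_adj G (hE v a0),
          gline_of_not_adj G (hE w a0), Set.pair_eq_pair_iff] at heq
        rcases heq with ⟨h, _⟩ | ⟨h1, h2⟩
        · exact h
        · rw [h1, ← h2]
    · intro v
      by_cases hv : v = a0
      · simp only [if_pos hv]; exact gline_mem_glines G h12
      · simp only [if_neg hv]; exact gline_mem_glines G hv
end

section
/- A graph on n ≥ 4 vertices consisting of a clique on n−1 vertices together with one additional vertex that has at most one neighbor in the clique has no universal line and induces exactly n distinct lines. -/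
theorem stmt_5 {V : Type*} [Fintype V] (G : SimpleGraph V) [DecidableRel G.Adj]
    (n : ℕ) (hn : Fintype.card V = n) (h4 : 4 ≤ n)
    (x : V) (hclique : ∀ a b : V, a ≠ x → b ≠ x → a ≠ b → G.Adj a b)
    (hx : {y : V | G.Adj x y}.ncard ≤ 1) :
    (∀ a b : V, a ≠ b → gline G a b ≠ Set.univ) ∧ (glines G).ncard = n := by
  classical
  -- x cannot have two distinct neighbors
  have hx2 : ∀ a b : V, G.Adj x a → G.Adj x b → a = b := by
    intro a b ha hb
    by_contra hne
    have h1 : 1 < {y : V | G.Adj x y}.ncard :=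
      (Set.one_lt_ncard_iff (Set.toFinite _)).2 ⟨a, b, ha, hb, hne⟩
    omega
  -- line between two clique vertices
  have key1 : ∀ a b : V, a ≠ x → b ≠ x → a ≠ b → gline G a b = ({x}ᶜ : Set V) := by
    intro a b hax hbx hab
    have hadj : G.Adj a b := hclique a b hax hbx hab
    rw [gline, if_pos hadj]
    ext c
    simp only [Set.mem_union, Set.mem_insert_iff, Set.mem_singleton_iff, Set.mem_setOf_eq,
      Set.mem_compl_iff]
    constructor
    · rintro ((rfl | rfl) | ⟨h1, h2⟩)
      · exact hax
      · exact hbx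
      · intro h'
        rw [h'] at h1 h2
        exact hab (hx2 a b h1.symm h2.symm)
    · intro hcx
      by_cases hca : c = a
      · exact Or.inl (Or.inl hca)
      by_cases hcb : c = b
      · exact Or.inl (Or.inr hcb)
      · exact Or.inr ⟨hclique a c hax hcx (Ne.symm hca),
          hclique b c hbx hcx (Ne.symm hcb)⟩
  -- lines through x
  have key2 : ∀ a : V, a ≠ x → gline G x a = {x, a} := by
    intro a hax
    rw [gline]
    split_ifs with h
    · ext c
      simp only [Set.mem_union, Set.mem_insert_iff, Set.mem_singleton_iff, Set.mem_setOf_eq]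
      constructor
      · rintro (h' | ⟨h1, h2⟩)
        · exact h'
        · exact absurd (hx2 a c h h1) h2.ne
      · tauto
    · rfl
  have key2' : ∀ a : V, a ≠ x → gline G a x = {x, a} := by
    intro a hax
    rw [gline]
    split_ifs with h
    · ext c
      simp only [Set.mem_union, Set.mem_insert_iff, Set.mem_singleton_iff, Set.mem_setOf_eq]
      constructor
      · rintro (h' | ⟨h1, h2⟩)
        · tauto
        · exact absurd (hx2 a c h.symm h2) h1.ne
      · tauto
    · exact Set.pair_comm a x
  -- form of every line
  have hform : ∀ a b : V, a ≠ b →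
      gline G a b = ({x}ᶜ : Set V) ∨ ∃ c, c ≠ x ∧ gline G a b = {x, c} := by
    intro a b hab
    by_cases hax : a = x
    · subst hax
      exact Or.inr ⟨b, Ne.symm hab, key2 b (Ne.symm hab)⟩
    by_cases hbx : b = x
    · subst hbx
      exact Or.inr ⟨a, hab, key2' a hab⟩
    · exact Or.inl (key1 a b hax hbx hab)
  -- cardinalities
  have hcompl : ({x}ᶜ : Set V).ncard = n - 1 := by
    have := Set.ncard_add_ncard_compl ({x} : Set V)
    rw [Set.ncard_singleton, Nat.card_eq_fintype_card, hn] at this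
    omega
  have hpair_ncard : ∀ c : V, c ≠ x → ({x, c} : Set V).ncard = 2 := fun c hc =>
    Set.ncard_pair (Ne.symm hc)
  have hcompl_ne_pair : ∀ c : V, ({x}ᶜ : Set V) ≠ {x, c} := by
    intro c h
    have h1 : ({x, c} : Set V).ncard ≤ 2 := by
      have := Set.ncard_insert_le x ({c} : Set V)
      simpa [Set.ncard_singleton] using this
    rw [← h, hcompl] at h1
    omega
  constructor
  · intro a b hab huniv
    rcases hform a b hab with h | ⟨c, hc, h⟩
    · rw [h] at huniv
      have : x ∈ ({x}ᶜ : Set V) := huniv ▸ Set.mem_univ x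
      exact this rfl
    · rw [h] at huniv
      have h1 : (Set.univ : Set V).ncard = n := by
        rw [Set.ncard_univ, Nat.card_eq_fintype_card, hn]
      rw [← huniv, hpair_ncard c hc] at h1
      omega
  · -- description of glines
    have hdesc : glines G = insert ({x}ᶜ : Set V)
        ((fun c => ({x, c} : Set V)) '' ({x}ᶜ : Set V)) := by
      ext s
      simp only [glines, Set.mem_setOf_eq, Set.mem_insert_iff, Set.mem_image,
        Set.mem_compl_iff, Set.mem_singleton_iff]
      constructor
      · rintro ⟨a, b, hab, rfl⟩
        rcases hform a b hab with h | ⟨c, hc, h⟩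
        · exact Or.inl h
        · exact Or.inr ⟨c, hc, h.symm⟩
      · rintro (rfl | ⟨c, hc, rfl⟩)
        · -- get two distinct vertices ≠ x
          have h2 : 1 < ({x}ᶜ : Set V).ncard := by rw [hcompl]; omega
          obtain ⟨a, b, ha, hb, hab⟩ := (Set.one_lt_ncard_iff (Set.toFinite _)).1 h2
          exact ⟨a, b, hab, (key1 a b ha hb hab).symm⟩
        · exact ⟨x, c, Ne.symm hc, (key2 c hc).symm⟩
    rw [hdesc]
    have hnotmem : ({x}ᶜ : Set V) ∉ (fun c => ({x, c} : Set V)) '' ({x}ᶜ : Set V) := by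
      rintro ⟨c, _, h⟩
      exact hcompl_ne_pair c h.symm
    rw [Set.ncard_insert_of_notMem hnotmem (Set.toFinite _),
      Set.ncard_image_of_injOn, hcompl]
    · omega
    · intro a ha b hb h
      simp only [Set.ext_iff, Set.mem_insert_iff, Set.mem_singleton_iff] at h
      rcases (h a).1 (Or.inr rfl) with h' | h'
      · exact absurd h' ha
      · exact h'
end

section
/- If a graph G on 4 vertices contains two distinct triangles, then G has a universal line. -/
theorem stmt_7 {V : Type*} [Fintype V] [DecidableEq V] (G : SimpleGraph V)
    [DecidableRel G.Adj] (hcard : Fintype.card V = 4)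
    (t₁ t₂ : Finset V) (ht₁ : G.IsNClique 3 t₁) (ht₂ : G.IsNClique 3 t₂)
    (hne : t₁ ≠ t₂) :
    ∃ a b : V, a ≠ b ∧ gline G a b = Set.univ := by
  have hc1 := ht₁.2
  have hc2 := ht₂.2
  -- intersection has at least 2 elements, union is everything
  have hunion : (t₁ ∪ t₂).card ≤ 4 := hcard ▸ Finset.card_le_univ _
  have hiss : t₁ ∩ t₂ ⊂ t₁ := by
    refine ⟨Finset.inter_subset_left, fun h => hne ?_⟩
    have hsub : t₁ ⊆ t₂ := fun x hx => (Finset.mem_inter.mp (h hx)).2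
    exact Finset.eq_of_subset_of_card_le hsub (by omega)
  have hilt : (t₁ ∩ t₂).card < 3 := hc1 ▸ Finset.card_lt_card hiss
  have hcie := Finset.card_inter_add_card_union t₁ t₂
  have hi2 : (t₁ ∩ t₂).card = 2 := by omega
  have hu4 : (t₁ ∪ t₂).card = 4 := by omega
  have huniv : t₁ ∪ t₂ = Finset.univ :=
    Finset.eq_univ_of_card _ (by omega)
  obtain ⟨a, ha, b, hb, hab⟩ := Finset.one_lt_card.mp (by omega : 1 < (t₁ ∩ t₂).card)
  refine ⟨a, b, hab, ?_⟩
  have ha1 := (Finset.mem_inter.mp ha).1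
  have ha2 := (Finset.mem_inter.mp ha).2
  have hb1 := (Finset.mem_inter.mp hb).1
  have hb2 := (Finset.mem_inter.mp hb).2
  have hadj : G.Adj a b := ht₁.1 ha1 hb1 hab
  ext c
  simp only [gline, if_pos hadj, Set.mem_union, Set.mem_insert_iff, Set.mem_singleton_iff,
    Set.mem_setOf_eq, Set.mem_univ, iff_true]
  by_cases hca : c = a
  · exact Or.inl (Or.inl hca)
  by_cases hcb : c = b
  · exact Or.inl (Or.inr hcb)
  right
  have hc : c ∈ t₁ ∪ t₂ := huniv ▸ Finset.mem_univ c
  rcases Finset.mem_union.mp hc with hc | hc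
  · exact ⟨ht₁.1 ha1 hc (Ne.symm hca), ht₁.1 hb1 hc (Ne.symm hcb)⟩
  · exact ⟨ht₂.1 ha2 hc (Ne.symm hca), ht₂.1 hb2 hc (Ne.symm hcb)⟩
end

section
/- If P is a finite poset on n elements with height h(P) ≥ 2 and no universal line, then P induces at least h(P) * C(floor(n/h(P)), 2) + floor(n/h(P)) * (n mod h(P)) + h(P) distinct lines. -/
open Classical

def pcomp {X : Type*} [PartialOrder X] (a b : X) : Prop := a < b ∨ b < a

def pline {X : Type*} [PartialOrder X] (a b : X) : Set X :=
  if pcomp a b then {a, b} ∪ {x | pcomp x a ∧ pcomp x b} else {a, b}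

def plines (X : Type*) [PartialOrder X] : Set (Set X) :=
  {s | ∃ a b : X, a ≠ b ∧ s = pline a b}

section Helpers

variable {X : Type*} [PartialOrder X]

lemma pcomp_symm {a b : X} (h : pcomp a b) : pcomp b a := Or.symm h

lemma ne_of_pcomp {a b : X} (h : pcomp a b) : a ≠ b := by
  rcases h with h | h
  · exact ne_of_lt h
  · exact (ne_of_lt h).symm

lemma pline_of_not_pcomp {a b : X} (h : ¬ pcomp a b) : pline a b = {a, b} := by
  unfold pline; rw [if_neg h]

lemma mem_pline_iff {a b : X} (h : pcomp a b) (z : X) :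
    z ∈ pline a b ↔ z = a ∨ z = b ∨ (pcomp z a ∧ pcomp z b) := by
  unfold pline
  rw [if_pos h]
  simp [Set.mem_union, Set.mem_insert_iff, Set.mem_setOf_eq, or_assoc]

lemma mem_pline_left (a b : X) : a ∈ pline a b := by
  by_cases h : pcomp a b
  · exact (mem_pline_iff h a).mpr (Or.inl rfl)
  · rw [pline_of_not_pcomp h]; exact Set.mem_insert a {b}

lemma mem_pline_right (a b : X) : b ∈ pline a b := by
  by_cases h : pcomp a b
  · exact (mem_pline_iff h b).mpr (Or.inr (Or.inl rfl))
  · rw [pline_of_not_pcomp h]; exact Set.mem_insert_of_mem a rfl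

lemma mem_pline_of_pcomp {a b z : X} (hab : pcomp a b) (h1 : pcomp z a) (h2 : pcomp z b) :
    z ∈ pline a b := (mem_pline_iff hab z).mpr (Or.inr (Or.inr ⟨h1, h2⟩))

lemma pline_comm (a b : X) : pline a b = pline b a := by
  by_cases h : pcomp a b
  · ext z
    rw [mem_pline_iff h, mem_pline_iff (pcomp_symm h)]
    tauto
  · rw [pline_of_not_pcomp h, pline_of_not_pcomp (fun hc => h (pcomp_symm hc))]
    exact Set.pair_comm a b

lemma pline_ne_pair {a b u v : X} (hab : pcomp a b) (huv : ¬ pcomp u v) (hune : u ≠ v) :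
    pline a b ≠ ({u, v} : Set X) := by
  intro heq
  have ha := mem_pline_left a b
  have hb := mem_pline_right a b
  rw [heq] at ha hb
  have hne := ne_of_pcomp hab
  simp only [Set.mem_insert_iff, Set.mem_singleton_iff] at ha hb
  rcases ha with ha | ha <;> rcases hb with hb | hb
  · exact hne (ha.trans hb.symm)
  · rw [ha, hb] at hab; exact huv hab
  · rw [ha, hb] at hab; exact huv (pcomp_symm hab)
  · exact hne (ha.trans hb.symm)

end Helpers

section Lvl

variable {X : Type*} [Fintype X] [PartialOrder X]

def levelSetAt (x : X) : Set ℕ :=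
  {k | ∃ c : Finset X, IsChain (· < ·) (c : Set X) ∧ x ∈ c ∧ (∀ y ∈ c, y ≤ x) ∧ c.card = k}

lemma one_mem_levelSetAt (x : X) : 1 ∈ levelSetAt x := by
  refine ⟨{x}, ?_, Finset.mem_singleton_self x, ?_, Finset.card_singleton x⟩
  · rw [Finset.coe_singleton]
    exact Set.subsingleton_singleton.isChain
  · intro y hy
    rw [Finset.mem_singleton] at hy
    exact hy.le

lemma levelSetAt_bdd (x : X) : BddAbove (levelSetAt x) := by
  refine ⟨Fintype.card X, fun k hk => ?_⟩
  obtain ⟨c, -, -, -, hcard⟩ := hk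
  rw [← hcard, ← Finset.card_univ]
  exact Finset.card_le_univ c

noncomputable def lvl (x : X) : ℕ := sSup (levelSetAt x)

lemma lvl_mem (x : X) : lvl x ∈ levelSetAt x :=
  Nat.sSup_mem ⟨1, one_mem_levelSetAt x⟩ (levelSetAt_bdd x)

lemma one_le_lvl (x : X) : 1 ≤ lvl x :=
  le_csSup (levelSetAt_bdd x) (one_mem_levelSetAt x)

lemma lvl_lt_lvl {a b : X} (hab : a < b) : lvl a < lvl b := by
  obtain ⟨c, hch, hmem, hle, hcard⟩ := lvl_mem a
  have hbnotin : b ∉ c := fun hb => hab.not_ge (hle b hb)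
  have hins : (lvl a) + 1 ∈ levelSetAt b := by
    refine ⟨insert b c, ?_, Finset.mem_insert_self b c, ?_, ?_⟩
    · rw [Finset.coe_insert]
      exact hch.insert fun y hy _ => Or.inr ((hle y hy).trans_lt hab)
    · intro y hy
      rcases Finset.mem_insert.mp hy with rfl | hy
      · exact le_rfl
      · exact (hle y hy).trans hab.le
    · rw [Finset.card_insert_of_notMem hbnotin, hcard]
  have : lvl a + 1 ≤ lvl b := le_csSup (levelSetAt_bdd b) hins
  omega

lemma not_pcomp_of_lvl_eq {a b : X} (h : lvl a = lvl b) : ¬ pcomp a b := by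
  rintro (hl | hl) <;> have := lvl_lt_lvl hl <;> omega

end Lvl

lemma choose_two_cast (m : ℕ) : ((Nat.choose m 2 : ℕ) : ℤ) * 2 = (m : ℤ) * ((m : ℤ) - 1) := by
  induction m with
  | zero => simp
  | succ k ih =>
    have hstep : (k + 1).choose 2 = k.choose 1 + k.choose 2 := Nat.choose_succ_succ k 1
    rw [hstep]
    push_cast [Nat.choose_one_right]
    push_cast at ih
    ring_nf
    ring_nf at ih
    linarith

lemma choose_two_tangent (q m : ℕ) :
    ((Nat.choose q 2 : ℕ) : ℤ) + q * ((m : ℤ) - q) ≤ ((Nat.choose m 2 : ℕ) : ℤ) := by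
  have h1 := choose_two_cast m
  have h2 := choose_two_cast q
  have h3 : (0 : ℤ) ≤ ((m : ℤ) - q) * ((m : ℤ) - q - 1) := by
    rcases le_or_gt ((m : ℤ) - q) 0 with hd | hd
    · nlinarith [hd]
    · exact mul_nonneg (by linarith) (by linarith)
  nlinarith [h1, h2, h3]

lemma sum_choose_two_ge {ι : Type*} (S : Finset ι) (f : ι → ℕ) (n h : ℕ)
    (hcard : S.card = h) (hsum : ∑ i ∈ S, f i = n) :
    h * Nat.choose (n / h) 2 + (n / h) * (n % h) ≤ ∑ i ∈ S, Nat.choose (f i) 2 := by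
  rcases Nat.eq_zero_or_pos h with rfl | hh
  · simp [Nat.div_zero]
  set q := n / h with hq
  set r := n % h with hr
  have hdm : h * q + r = n := Nat.div_add_mod n h
  have hsumZ : ∑ i ∈ S, (((Nat.choose q 2 : ℕ) : ℤ) + q * ((f i : ℤ) - q)) ≤
      ∑ i ∈ S, ((Nat.choose (f i) 2 : ℕ) : ℤ) :=
    Finset.sum_le_sum fun i _ => choose_two_tangent q (f i)
  have hL : ∑ i ∈ S, (((Nat.choose q 2 : ℕ) : ℤ) + q * ((f i : ℤ) - q)) =
      (h : ℤ) * ((Nat.choose q 2 : ℕ) : ℤ) + q * ((n : ℤ) - h * q) := by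
    rw [Finset.sum_add_distrib, Finset.sum_const, hcard, nsmul_eq_mul, ← Finset.mul_sum]
    congr 1
    rw [Finset.sum_sub_distrib, Finset.sum_const, hcard, nsmul_eq_mul]
    congr 2
    rw [← Nat.cast_sum, hsum]
  have hrZ : (n : ℤ) - h * q = r := by
    have : (h : ℤ) * q + r = n := by exact_mod_cast hdm
    linarith
  have hfin : ((h * Nat.choose q 2 + q * r : ℕ) : ℤ) ≤
      ((∑ i ∈ S, Nat.choose (f i) 2 : ℕ) : ℤ) := by
    push_cast
    rw [hL, hrZ] at hsumZ
    push_cast at hsumZ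
    linarith
  exact_mod_cast hfin

theorem stmt_9 {X : Type*} [Fintype X] [PartialOrder X] (n h : ℕ)
    (hn : Fintype.card X = n)
    (hmax : ∃ c : Finset X, IsChain (· < ·) (c : Set X) ∧ c.card = h)
    (hub : ∀ c : Finset X, IsChain (· < ·) (c : Set X) → c.card ≤ h)
    (h2 : 2 ≤ h)
    (huniv : ∀ a b : X, a ≠ b → pline a b ≠ Set.univ) :
    h * Nat.choose (n / h) 2 + (n / h) * (n % h) + h ≤ (plines X).ncard := by
  classical
  obtain ⟨cf, hcfchain, hcfcard⟩ := hmax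
  have hXne : Nonempty X := by
    obtain ⟨x, -⟩ := Finset.card_pos.mp (show 0 < cf.card by omega)
    exact ⟨x⟩
  have hlvl_le : ∀ x : X, lvl x ≤ h := by
    intro x
    obtain ⟨c, hc, -, -, hcard⟩ := lvl_mem x
    rw [← hcard]
    exact hub c hc
  have hlvl_Icc : ∀ x : X, lvl x ∈ Finset.Icc 1 h := fun x =>
    Finset.mem_Icc.mpr ⟨one_le_lvl x, hlvl_le x⟩
  -- enumerate the maximum chain by level
  have hinj : Set.InjOn lvl (cf : Set X) := by
    intro a ha b hb hab
    by_contra hne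
    rcases hcfchain ha hb hne with hlt | hlt <;>
      · have := lvl_lt_lvl hlt; omega
  have himg : cf.image lvl = Finset.Icc 1 h := by
    apply Finset.eq_of_subset_of_card_le
    · intro i hi
      obtain ⟨x, -, rfl⟩ := Finset.mem_image.mp hi
      exact hlvl_Icc x
    · rw [Finset.card_image_of_injOn hinj, hcfcard, Nat.card_Icc]
      omega
  have hxi_ex : ∀ i : ℕ, ∃ x : X, i ∈ Finset.Icc 1 h → (x ∈ cf ∧ lvl x = i) := by
    intro i
    by_cases hi : i ∈ Finset.Icc 1 h
    · rw [← himg] at hi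
      obtain ⟨x, hx, hlx⟩ := Finset.mem_image.mp hi
      exact ⟨x, fun _ => ⟨hx, hlx⟩⟩
    · exact ⟨hXne.some, fun hc => absurd hc hi⟩
  choose xi hxi using hxi_ex
  have hxilvl : ∀ i, i ∈ Finset.Icc 1 h → lvl (xi i) = i := fun i hi => (hxi i hi).2
  have hxine : ∀ i j, i ∈ Finset.Icc 1 h → j ∈ Finset.Icc 1 h → i ≠ j → xi i ≠ xi j := by
    intro i j hi hj hij he
    rw [← hxilvl i hi, ← hxilvl j hj, he] at hij
    exact hij rfl
  have hxicomp : ∀ i j, i ∈ Finset.Icc 1 h → j ∈ Finset.Icc 1 h → i ≠ j →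
      pcomp (xi i) (xi j) := by
    intro i j hi hj hij
    exact hcfchain (Finset.mem_coe.mpr (hxi i hi).1) (Finset.mem_coe.mpr (hxi j hj).1)
      (hxine i j hi hj hij)
  -- Mirsky levels
  set A : ℕ → Finset X := fun i => Finset.univ.filter (fun z => lvl z = i) with hAdef
  have hA : ∀ (z : X) (i : ℕ), z ∈ A i ↔ lvl z = i := by
    intro z i
    rw [hAdef]
    simp
  have hsumA : ∑ i ∈ Finset.Icc 1 h, (A i).card = n := by
    rw [← hn, ← Finset.card_univ]
    exact (Finset.card_eq_sum_card_fiberwise fun x _ => hlvl_Icc x).symm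
  -- the split into levels with/without a cross-level incomparable witness
  set P : ℕ → Prop := fun i => ∃ z : X, ¬ pcomp z (xi i) ∧ lvl z ≠ i with hPdef
  set T : Finset ℕ := (Finset.Icc 1 h).filter P with hTdef
  set G : Finset ℕ := (Finset.Icc 1 h).filter (fun i => ¬ P i) with hGdef
  have hTIcc : ∀ i ∈ T, i ∈ Finset.Icc 1 h := fun i hi => (Finset.mem_filter.mp hi).1
  have hGIcc : ∀ i ∈ G, i ∈ Finset.Icc 1 h := fun i hi => (Finset.mem_filter.mp hi).1
  have hTG : T.card + G.card = h := by
    rw [hTdef, hGdef, Finset.card_filter_add_card_filter_not, Nat.card_Icc]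
    omega
  have hGcomp : ∀ i ∈ G, ∀ z : X, lvl z ≠ i → pcomp z (xi i) := by
    intro i hiG z hz
    by_contra hc
    exact (Finset.mem_filter.mp hiG).2 ⟨z, hc, hz⟩
  have hzi_ex : ∀ i : ℕ, ∃ z : X, P i → (¬ pcomp z (xi i) ∧ lvl z ≠ i) := by
    intro i
    by_cases hi : P i
    · obtain ⟨z, hz⟩ := hi
      exact ⟨z, fun _ => hz⟩
    · exact ⟨hXne.some, fun hc => absurd hc hi⟩
  choose zi hzi using hzi_ex
  have hziT : ∀ i ∈ T, ¬ pcomp (zi i) (xi i) ∧ lvl (zi i) ≠ i := fun i hi =>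
    hzi i (Finset.mem_filter.mp hi).2
  -- family 1 : same-level pairs
  set S1 : Finset (Set X) :=
    (Finset.Icc 1 h).biUnion
      (fun i => ((A i).powersetCard 2).image (fun s : Finset X => (s : Set X))) with hS1def
  have hS1card : S1.card = ∑ i ∈ Finset.Icc 1 h, Nat.choose (A i).card 2 := by
    rw [hS1def, Finset.card_biUnion]
    · exact Finset.sum_congr rfl fun i _ => by
        rw [Finset.card_image_of_injective _ Finset.coe_injective, Finset.card_powersetCard]
    · intro i hi j hj hij
      rw [Function.onFun, Finset.disjoint_left]
      rintro L hLi hLj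
      obtain ⟨s, hs, rfl⟩ := Finset.mem_image.mp hLi
      obtain ⟨s', hs', heq⟩ := Finset.mem_image.mp hLj
      have hss : s' = s := Finset.coe_injective heq
      subst hss
      obtain ⟨hsub, hc2⟩ := Finset.mem_powersetCard.mp hs
      obtain ⟨hsub', -⟩ := Finset.mem_powersetCard.mp hs'
      obtain ⟨z, hz⟩ := Finset.card_pos.mp (show 0 < s'.card by omega)
      have e1 := (hA z i).mp (hsub hz)
      have e2 := (hA z j).mp (hsub' hz)
      exact hij (e1.symm.trans e2)
  have hS1line : ∀ L ∈ S1, ∃ c d : X, c ≠ d ∧ ¬ pcomp c d ∧ lvl c = lvl d ∧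
      L = ({c, d} : Set X) := by
    intro L hL
    rw [hS1def] at hL
    obtain ⟨i, hiI, hL2⟩ := Finset.mem_biUnion.mp hL
    obtain ⟨s, hs, rfl⟩ := Finset.mem_image.mp hL2
    obtain ⟨hsub, hc2⟩ := Finset.mem_powersetCard.mp hs
    obtain ⟨c, d, hcd, rfl⟩ := Finset.card_eq_two.mp hc2
    have hc : lvl c = i := (hA c i).mp (hsub (Finset.mem_insert_self c {d}))
    have hd : lvl d = i := (hA d i).mp (hsub (by simp))
    exact ⟨c, d, hcd, not_pcomp_of_lvl_eq (hc.trans hd.symm), hc.trans hd.symm, by simp⟩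
  -- family 2 : cross-level incomparable pairs
  set S2 : Finset (Set X) := T.image (fun i => ({zi i, xi i} : Set X)) with hS2def
  have hS2line : ∀ L ∈ S2, ∃ c d : X, c ≠ d ∧ ¬ pcomp c d ∧ lvl c ≠ lvl d ∧
      L = ({c, d} : Set X) := by
    intro L hL
    rw [hS2def] at hL
    obtain ⟨i, hiT, rfl⟩ := Finset.mem_image.mp hL
    obtain ⟨hnc, hnl⟩ := hziT i hiT
    have hxl := hxilvl i (hTIcc i hiT)
    refine ⟨zi i, xi i, ?_, hnc, by rw [hxl]; exact hnl, rfl⟩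
    intro he
    rw [he, hxl] at hnl
    exact hnl rfl
  have hS2card : S2.card = T.card := by
    rw [hS2def]
    apply Finset.card_image_of_injOn
    intro i hiT j hjT heq
    by_contra hij
    have heq' : ({zi i, xi i} : Set X) = {zi j, xi j} := heq
    have hx : xi i ∈ ({zi j, xi j} : Set X) := by
      rw [← heq']
      exact Set.mem_insert_of_mem _ rfl
    simp only [Set.mem_insert_iff, Set.mem_singleton_iff] at hx
    rcases hx with hx | hx
    · exact (hziT j hjT).1 (hx ▸ hxicomp i j (hTIcc i hiT) (hTIcc j hjT) hij)
    · exact hxine i j (hTIcc i hiT) (hTIcc j hjT) hij hx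
  -- helper lemmas for family 3
  set thin : ℕ → Prop := fun i => ∀ z : X, lvl z = i → z = xi i with hthindef
  have hnotthin : ∀ i, ¬ thin i → ∃ w : X, lvl w = i ∧ w ≠ xi i := by
    intro i hti
    by_contra hc
    push_neg at hc
    exact hti fun z hz => hc z hz
  have hthin2 : ∀ i j, i ∈ G → j ∈ G → i ≠ j → thin i → thin j → False := by
    intro i j hiG hjG hij hti htj
    have hiI := hGIcc i hiG
    have hjI := hGIcc j hjG
    apply huniv (xi i) (xi j) (hxine i j hiI hjI hij)
    ext z
    simp only [Set.mem_univ, iff_true]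
    by_cases hz1 : z = xi i
    · rw [hz1]; exact mem_pline_left _ _
    by_cases hz2 : z = xi j
    · rw [hz2]; exact mem_pline_right _ _
    have hl1 : lvl z ≠ i := fun hl => hz1 (hti z hl)
    have hl2 : lvl z ≠ j := fun hl => hz2 (htj z hl)
    exact mem_pline_of_pcomp (hxicomp i j hiI hjI hij) (hGcomp i hiG z hl1) (hGcomp j hjG z hl2)
  have hNotMem : ∀ i c (w : X), i ∈ Finset.Icc 1 h → c ∈ Finset.Icc 1 h → c ≠ i →
      lvl w = i → w ≠ xi i → w ∉ pline (xi i) (xi c) := by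
    intro i c w hiI hcI hci hlw hwne hmem
    rw [mem_pline_iff (hxicomp i c hiI hcI (Ne.symm hci)) w] at hmem
    rcases hmem with he | he | ⟨hp1, -⟩
    · exact hwne he
    · apply hci
      rw [← hxilvl c hcI, ← he, hlw]
    · exact not_pcomp_of_lvl_eq (by rw [hlw, hxilvl i hiI]) hp1
  have hMem : ∀ a b (w : X), a ∈ G → b ∈ G → a ≠ b → lvl w ≠ a → lvl w ≠ b →
      w ∈ pline (xi a) (xi b) := fun a b w ha hb hab hw1 hw2 =>
    mem_pline_of_pcomp (hxicomp a b (hGIcc a ha) (hGIcc b hb) hab)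
      (hGcomp a ha w hw1) (hGcomp b hb w hw2)
  -- family 3 : comparable lines
  have hS3 : ∃ S3 : Finset (Set X),
      (∀ L ∈ S3, ∃ a b : X, a ≠ b ∧ pcomp a b ∧ L = pline a b) ∧ G.card ≤ S3.card := by
    have h1I : (1 : ℕ) ∈ Finset.Icc 1 h := Finset.mem_Icc.mpr ⟨le_refl 1, by omega⟩
    have h2I : (2 : ℕ) ∈ Finset.Icc 1 h := Finset.mem_Icc.mpr ⟨by omega, h2⟩
    rcases Nat.eq_zero_or_pos G.card with hg0 | hgpos
    · exact ⟨∅, by simp, by omega⟩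
    rcases Nat.lt_or_ge G.card 2 with hg1 | hg2
    · refine ⟨{pline (xi 1) (xi 2)}, ?_, ?_⟩
      · intro L hL
        rw [Finset.mem_singleton] at hL
        exact ⟨xi 1, xi 2, hxine 1 2 h1I h2I (by omega), hxicomp 1 2 h1I h2I (by omega), hL⟩
      · rw [Finset.card_singleton]; omega
    have hthinle : (G.filter thin).card ≤ 1 := by
      by_contra hcon
      obtain ⟨i, hi, j, hj, hij⟩ := Finset.one_lt_card.mp (show 1 < (G.filter thin).card by omega)
      exact hthin2 i j (Finset.mem_filter.mp hi).1 (Finset.mem_filter.mp hj).1 hij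
        (Finset.mem_filter.mp hi).2 (Finset.mem_filter.mp hj).2
    rcases Nat.lt_or_ge G.card 3 with hg2' | hg3
    · -- |G| = 2
      obtain ⟨i, j, hij, hGij⟩ := Finset.card_eq_two.mp (show G.card = 2 by omega)
      have hiG : i ∈ G := by rw [hGij]; exact Finset.mem_insert_self i {j}
      have hjG : j ∈ G := by rw [hGij]; simp
      have key : ∀ a b : ℕ, a ∈ G → b ∈ G → a ≠ b → ¬ thin a →
          ∃ S3 : Finset (Set X),
            (∀ L ∈ S3, ∃ u v : X, u ≠ v ∧ pcomp u v ∧ L = pline u v) ∧ 2 ≤ S3.card := by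
        intro a b haG hbG hab hta
        obtain ⟨w, hwl, hwne⟩ := hnotthin a hta
        have haI := hGIcc a haG
        have hbI := hGIcc b hbG
        have hwb : pcomp w (xi b) := hGcomp b hbG w (by rw [hwl]; exact hab)
        have hwxb : w ≠ xi b := ne_of_pcomp hwb
        refine ⟨{pline (xi a) (xi b), pline w (xi b)}, ?_, ?_⟩
        · intro L hL
          rcases Finset.mem_insert.mp hL with rfl | hL
          · exact ⟨xi a, xi b, hxine a b haI hbI hab, hxicomp a b haI hbI hab, rfl⟩
          · rw [Finset.mem_singleton] at hL
            exact ⟨w, xi b, hwxb, hwb, hL⟩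
        · rw [Finset.card_insert_of_notMem, Finset.card_singleton]
          rw [Finset.mem_singleton]
          intro heq
          exact hNotMem a b w haI hbI (Ne.symm hab) hwl hwne
            (by rw [heq]; exact mem_pline_left _ _)
      by_cases hti : thin i
      · have htj : ¬ thin j := fun htj => hthin2 i j hiG hjG hij hti htj
        obtain ⟨S3, hp, hc⟩ := key j i hjG hiG (Ne.symm hij) htj
        exact ⟨S3, hp, by omega⟩
      · obtain ⟨S3, hp, hc⟩ := key i j hiG hjG hij hti
        exact ⟨S3, hp, by omega⟩
    · -- |G| ≥ 3
      have hnt_card : 2 ≤ (G.filter (fun i => ¬ thin i)).card := by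
        have := Finset.card_filter_add_card_filter_not (s := G) (p := thin)
        omega
      obtain ⟨j0, hj0mem⟩ := Finset.card_pos.mp
        (show 0 < (G.filter (fun i => ¬ thin i)).card by omega)
      have hj0G : j0 ∈ G := (Finset.mem_filter.mp hj0mem).1
      have hj0nt : ¬ thin j0 := (Finset.mem_filter.mp hj0mem).2
      obtain ⟨i0, hi0, i1, hi1, hi01⟩ := Finset.one_lt_card.mp
        (show 1 < (G.erase j0).card by rw [Finset.card_erase_of_mem hj0G]; omega)
      have hi0G : i0 ∈ G := Finset.mem_of_mem_erase hi0
      have hi1G : i1 ∈ G := Finset.mem_of_mem_erase hi1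
      have hi0j0 : i0 ≠ j0 := Finset.ne_of_mem_erase hi0
      have hi1j0 : i1 ≠ j0 := Finset.ne_of_mem_erase hi1
      set lam : ℕ → Set X :=
        fun i => if i = j0 then pline (xi i0) (xi i1) else pline (xi i) (xi j0) with hlamdef
      have hdist : ∀ a b : ℕ, a ∈ G → b ∈ G → a ≠ j0 → b ≠ j0 → a ≠ b → ¬ thin a →
          pline (xi a) (xi j0) ≠ pline (xi b) (xi j0) := by
        intro a b haG hbG haj hbj hab hta heq
        obtain ⟨w, hwl, hwne⟩ := hnotthin a hta
        have hin : w ∈ pline (xi b) (xi j0) :=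
          hMem b j0 w hbG hj0G hbj (by rw [hwl]; exact hab)
            (by rw [hwl]; exact haj)
        rw [← heq] at hin
        exact hNotMem a j0 w (hGIcc a haG) (hGIcc j0 hj0G) (Ne.symm haj) hwl hwne hin
      have hdistj0 : ∀ a : ℕ, a ∈ G → a ≠ j0 →
          pline (xi a) (xi j0) ≠ pline (xi i0) (xi i1) := by
        intro a haG haj heq
        obtain ⟨w0, hw0l, hw0ne⟩ := hnotthin j0 hj0nt
        have hin : w0 ∈ pline (xi i0) (xi i1) :=
          hMem i0 i1 w0 hi0G hi1G hi01 (by rw [hw0l]; exact Ne.symm hi0j0)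
            (by rw [hw0l]; exact Ne.symm hi1j0)
        rw [← heq, pline_comm] at hin
        exact hNotMem j0 a w0 (hGIcc j0 hj0G) (hGIcc a haG) haj hw0l hw0ne hin
      have hlaminj : Set.InjOn lam (G : Set ℕ) := by
        intro a haG b hbG heq
        by_cases haj : a = j0 <;> by_cases hbj : b = j0
        · rw [haj, hbj]
        · exfalso
          rw [hlamdef] at heq
          simp only [if_pos haj, if_neg hbj] at heq
          exact hdistj0 b hbG hbj heq.symm
        · exfalso
          rw [hlamdef] at heq
          simp only [if_neg haj, if_pos hbj] at heq
          exact hdistj0 a haG haj heq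
        · by_contra hab
          rw [hlamdef] at heq
          simp only [if_neg haj, if_neg hbj] at heq
          by_cases hta : thin a
          · have htb : ¬ thin b := fun htb => hthin2 a b haG hbG hab hta htb
            exact hdist b a hbG haG hbj haj (Ne.symm hab) htb heq.symm
          · exact hdist a b haG hbG haj hbj hab hta heq
      refine ⟨G.image lam, ?_, ?_⟩
      · intro L hL
        obtain ⟨i, hiG, rfl⟩ := Finset.mem_image.mp hL
        rw [hlamdef]
        by_cases hij0 : i = j0
        · simp only [if_pos hij0]
          exact ⟨xi i0, xi i1, hxine i0 i1 (hGIcc i0 hi0G) (hGIcc i1 hi1G) hi01,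
            hxicomp i0 i1 (hGIcc i0 hi0G) (hGIcc i1 hi1G) hi01, rfl⟩
        · simp only [if_neg hij0]
          exact ⟨xi i, xi j0, hxine i j0 (hGIcc i hiG) (hGIcc j0 hj0G) hij0,
            hxicomp i j0 (hGIcc i hiG) (hGIcc j0 hj0G) hij0, rfl⟩
      · rw [Finset.card_image_of_injOn hlaminj]
  obtain ⟨S3, hS3line, hS3card⟩ := hS3
  -- disjointness
  have hd12 : Disjoint S1 S2 := by
    rw [Finset.disjoint_left]
    intro L hL1 hL2
    obtain ⟨c, d, hcd, -, hll, hLcd⟩ := hS1line L hL1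
    obtain ⟨c', d', hcd', -, hll', hLcd'⟩ := hS2line L hL2
    have hmemlvl : ∀ u : X, u ∈ ({c, d} : Set X) → lvl u = lvl c := by
      intro u hu
      simp only [Set.mem_insert_iff, Set.mem_singleton_iff] at hu
      rcases hu with rfl | rfl
      · rfl
      · exact hll.symm
    have he1 : lvl c' = lvl c := hmemlvl c' (by rw [← hLcd, hLcd']; exact Set.mem_insert _ _)
    have he2 : lvl d' = lvl c := hmemlvl d'
      (by rw [← hLcd, hLcd']; exact Set.mem_insert_of_mem _ rfl)
    exact hll' (he1.trans he2.symm)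
  have hd123 : Disjoint (S1 ∪ S2) S3 := by
    rw [Finset.disjoint_left]
    intro L hL12 hL3
    obtain ⟨a, b, hab, hpab, hLab⟩ := hS3line L hL3
    rcases Finset.mem_union.mp hL12 with hL1 | hL2
    · obtain ⟨c, d, hcd, hnc, -, hLcd⟩ := hS1line L hL1
      exact pline_ne_pair hpab hnc hcd (by rw [← hLab, hLcd])
    · obtain ⟨c, d, hcd, hnc, -, hLcd⟩ := hS2line L hL2
      exact pline_ne_pair hpab hnc hcd (by rw [← hLab, hLcd])
  -- all are lines
  have hplinesub : ∀ L ∈ S1 ∪ S2 ∪ S3, L ∈ plines X := by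
    intro L hL
    rcases Finset.mem_union.mp hL with hL12 | hL3
    · rcases Finset.mem_union.mp hL12 with hL1 | hL2
      · obtain ⟨c, d, hcd, hnc, -, hLcd⟩ := hS1line L hL1
        exact ⟨c, d, hcd, by rw [hLcd, pline_of_not_pcomp hnc]⟩
      · obtain ⟨c, d, hcd, hnc, -, hLcd⟩ := hS2line L hL2
        exact ⟨c, d, hcd, by rw [hLcd, pline_of_not_pcomp hnc]⟩
    · obtain ⟨a, b, hab, -, hLab⟩ := hS3line L hL3
      exact ⟨a, b, hab, hLab⟩
  -- final counting
  have hcardsum : (S1 ∪ S2 ∪ S3).card = S1.card + S2.card + S3.card := by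
    rw [Finset.card_union_of_disjoint hd123, Finset.card_union_of_disjoint hd12]
  have hle : (S1 ∪ S2 ∪ S3).card ≤ (plines X).ncard := by
    rw [← Set.ncard_coe_finset]
    exact Set.ncard_le_ncard (fun L hL => hplinesub L hL) (Set.toFinite _)
  have hconv : h * Nat.choose (n / h) 2 + (n / h) * (n % h) ≤
      ∑ i ∈ Finset.Icc 1 h, Nat.choose ((A i).card) 2 :=
    sum_choose_two_ge (Finset.Icc 1 h) (fun i => (A i).card) n h
      (by rw [Nat.card_Icc]; omega) hsumA
  calc h * Nat.choose (n / h) 2 + (n / h) * (n % h) + h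
      ≤ S1.card + S2.card + S3.card := by
        rw [hS1card, hS2card]
        have e1 : G.card ≤ S3.card := hS3card
        have e2 : T.card + G.card = h := hTG
        have e3 := hconv
        omega
    _ = (S1 ∪ S2 ∪ S3).card := hcardsum.symm
    _ ≤ (plines X).ncard := hle
end

section
/- If P is a finite poset on n elements with no universal line and height at least 2, then P induces at least n distinct lines. -/
open Classical

section Aux

variable {X : Type*} [PartialOrder X]

/-- incomparability graph -/
def igraph (X : Type*) [PartialOrder X] : SimpleGraph X where
  Adj a b := a ≠ b ∧ ¬ pcomp a b
  symm := by
    constructor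
    intro a b h
    exact ⟨h.1.symm, fun hc => h.2 (pcomp_symm hc)⟩
  loopless := by constructor; intro a h; exact h.1 rfl

lemma igraph_adj {a b : X} : (igraph X).Adj a b ↔ a ≠ b ∧ ¬ pcomp a b := Iff.rfl

lemma pline_eq_compl {a b : X} (_hab : a ≠ b) (h : pcomp a b) :
    pline a b = ((igraph X).neighborSet a ∪ (igraph X).neighborSet b)ᶜ := by
  ext x
  simp only [pline, if_pos h, Set.mem_union, Set.mem_insert_iff, Set.mem_singleton_iff,
    Set.mem_setOf_eq, Set.mem_compl_iff, SimpleGraph.mem_neighborSet, igraph_adj, not_or,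
    not_and, not_not]
  unfold pcomp at *
  by_cases h1 : x = a <;> by_cases h2 : x = b <;> simp [h1, h2] <;> tauto

/-- the connected component of a vertex in the incomparability graph -/
def ccm {X : Type*} [PartialOrder X] (v : X) : (igraph X).ConnectedComponent :=
  (igraph X).connectedComponentMk v

lemma ccm_out {X : Type*} [PartialOrder X] (c : (igraph X).ConnectedComponent) :
    ccm (Quot.out c) = c := c.out_eq

lemma of_cc_ne {v w : X} (h : ccm v ≠ ccm w) : v ≠ w ∧ pcomp v w := by
  have hvw : v ≠ w := by rintro rfl; exact h rfl
  refine ⟨hvw, ?_⟩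
  by_contra hc
  exact h (SimpleGraph.ConnectedComponent.connectedComponentMk_eq_of_adj ⟨hvw, hc⟩)

lemma nbr_nonempty (huniv : ∀ a b : X, a ≠ b → pline a b ≠ Set.univ)
    {a b : X} (hab : a ≠ b) (h : pcomp a b) :
    ((igraph X).neighborSet a ∪ (igraph X).neighborSet b).Nonempty := by
  rw [Set.nonempty_iff_ne_empty]
  intro he
  apply huniv a b hab
  rw [pline_eq_compl hab h, he, Set.compl_empty]

lemma full_unique (huniv : ∀ a b : X, a ≠ b → pline a b ≠ Set.univ)
    {f g : X} (hf : (igraph X).neighborSet f = ∅) (hg : (igraph X).neighborSet g = ∅) :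
    f = g := by
  by_contra hfg
  have hcomp : pcomp f g := by
    by_contra hc
    have : g ∈ (igraph X).neighborSet f := ⟨hfg, hc⟩
    rw [hf] at this; exact this
  have := nbr_nonempty huniv hfg hcomp
  rw [hf, hg, Set.union_empty] at this
  exact this.ne_empty rfl

lemma ccm_of_mem_nbr {v w : X} (h : w ∈ (igraph X).neighborSet v) : ccm w = ccm v :=
  (SimpleGraph.ConnectedComponent.connectedComponentMk_eq_of_adj h).symm

lemma pline_of_ccm_ne {v w : X} (h : ccm v ≠ ccm w) :
    pline v w = ((igraph X).neighborSet v ∪ (igraph X).neighborSet w)ᶜ := by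
  obtain ⟨h1, h2⟩ := of_cc_ne h
  exact pline_eq_compl h1 h2

lemma exists_psi (huniv : ∀ a b : X, a ≠ b → pline a b ≠ Set.univ)
    (h2 : ∃ a b : X, a < b) :
    ∃ ψ : (igraph X).ConnectedComponent → Set X, Function.Injective ψ ∧
      ∀ c, ∃ a b : X, a ≠ b ∧ pcomp a b ∧ ψ c = pline a b := by
  classical
  obtain ⟨a₀, b₀, hab₀⟩ := h2
  rcases subsingleton_or_nontrivial (igraph X).ConnectedComponent with hs | hnt
  · exact ⟨fun _ => pline a₀ b₀, fun c c' _ => Subsingleton.elim c c',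
      fun c => ⟨a₀, b₀, hab₀.ne, Or.inl hab₀, rfl⟩⟩
  have hkey : ∃ c0 : (igraph X).ConnectedComponent,
      ∀ v : X, ccm v ≠ c0 → ((igraph X).neighborSet v).Nonempty := by
    by_cases hfull : ∃ f : X, (igraph X).neighborSet f = ∅
    · obtain ⟨f, hf⟩ := hfull
      refine ⟨ccm f, fun v hv => ?_⟩
      rw [Set.nonempty_iff_ne_empty]
      intro he
      exact hv (by rw [full_unique huniv he hf])
    · refine ⟨ccm a₀, fun v _ => ?_⟩
      rw [Set.nonempty_iff_ne_empty]
      exact fun he => hfull ⟨v, he⟩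
  obtain ⟨c0, hc0⟩ := hkey
  obtain ⟨c1, hc1⟩ := exists_ne c0
  have hccx0 : ccm (Quot.out c0) = c0 := ccm_out c0
  have hccu1 : ccm (Quot.out c1) = c1 := ccm_out c1
  obtain ⟨z1, hz1⟩ := hc0 (Quot.out c1) (by rw [hccu1]; exact hc1)
  have hccz1 : ccm z1 = c1 := by rw [ccm_of_mem_nbr hz1, hccu1]
  have hz1ne : ccm (Quot.out c0) ≠ ccm z1 := by
    rw [hccx0, hccz1]; exact fun hh => hc1 hh.symm
  have houtne : ∀ c : (igraph X).ConnectedComponent, c ≠ c0 →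
      ccm (Quot.out c0) ≠ ccm (Quot.out c) := by
    intro c h
    rw [hccx0, ccm_out]; exact fun hh => h hh.symm
  refine ⟨fun c => if c = c0 then pline (Quot.out c0) z1 else pline (Quot.out c0) (Quot.out c),
    ?_, ?_⟩
  · -- injectivity
    have main : ∀ c' : (igraph X).ConnectedComponent, c' ≠ c0 →
        pline (Quot.out c0) z1 ≠ pline (Quot.out c0) (Quot.out c') := by
      intro c' h' hcc'
      rw [pline_of_ccm_ne hz1ne, pline_of_ccm_ne (houtne c' h'), compl_inj_iff] at hcc'
      by_cases hcc1 : c' = c1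
      · subst hcc1
        have hu1z1 : Quot.out c' ∈ (igraph X).neighborSet z1 := (igraph X).adj_symm hz1
        have : Quot.out c' ∈ (igraph X).neighborSet (Quot.out c0) ∪
            (igraph X).neighborSet (Quot.out c') := by
          rw [← hcc']; exact Or.inr hu1z1
        rcases this with hmem | hmem
        · have := ccm_of_mem_nbr hmem
          rw [hccu1, hccx0] at this
          exact hc1 this
        · exact (igraph X).irrefl hmem
      · obtain ⟨y, hy⟩ := hc0 (Quot.out c') (by rw [ccm_out]; exact h')
        have hccy : ccm y = c' := by rw [ccm_of_mem_nbr hy, ccm_out]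
        have : y ∈ (igraph X).neighborSet (Quot.out c0) ∪ (igraph X).neighborSet z1 := by
          rw [hcc']; exact Or.inr hy
        rcases this with hmem | hmem
        · have := ccm_of_mem_nbr hmem
          rw [hccy, hccx0] at this
          exact h' this
        · have := ccm_of_mem_nbr hmem
          rw [hccy, hccz1] at this
          exact hcc1 this
    have main2 : ∀ c c' : (igraph X).ConnectedComponent, c ≠ c0 → c' ≠ c0 → c ≠ c' →
        pline (Quot.out c0) (Quot.out c) ≠ pline (Quot.out c0) (Quot.out c') := by
      intro c c' h h' hne hcc'
      rw [pline_of_ccm_ne (houtne c h), pline_of_ccm_ne (houtne c' h'), compl_inj_iff] at hcc'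
      obtain ⟨y, hy⟩ := hc0 (Quot.out c) (by rw [ccm_out]; exact h)
      have hccy : ccm y = c := by rw [ccm_of_mem_nbr hy, ccm_out]
      have : y ∈ (igraph X).neighborSet (Quot.out c0) ∪ (igraph X).neighborSet (Quot.out c') := by
        rw [← hcc']; exact Or.inr hy
      rcases this with hmem | hmem
      · have := ccm_of_mem_nbr hmem
        rw [hccy, hccx0] at this
        exact h this
      · have := ccm_of_mem_nbr hmem
        rw [hccy, ccm_out] at this
        exact hne this
    intro c c' hcc'
    dsimp only at hcc'
    by_cases h : c = c0 <;> by_cases h' : c' = c0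
    · rw [h, h']
    · exfalso
      rw [if_pos h, if_neg h'] at hcc'
      exact main c' h' hcc'
    · exfalso
      rw [if_neg h, if_pos h'] at hcc'
      exact main c h hcc'.symm
    · by_contra hne
      rw [if_neg h, if_neg h'] at hcc'
      exact main2 c c' h h' hne hcc'
  · -- representation
    intro c
    dsimp only
    by_cases h : c = c0
    · obtain ⟨ha, hb⟩ := of_cc_ne hz1ne
      exact ⟨Quot.out c0, z1, ha, hb, by rw [if_pos h]⟩
    · obtain ⟨ha, hb⟩ := of_cc_ne (houtne c h)
      exact ⟨Quot.out c0, Quot.out c, ha, hb, by rw [if_neg h]⟩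

lemma exists_parent (v r : X) (hne : v ≠ r) (hr : (igraph X).Reachable v r) :
    ∃ w, (igraph X).Adj v w ∧ ccm w = ccm v ∧
      (igraph X).dist w r < (igraph X).dist v r := by
  obtain ⟨p, hp⟩ := hr.exists_walk_length_eq_dist
  cases p with
  | nil => exact absurd rfl hne
  | @cons _ w _ hadj q =>
    refine ⟨w, hadj, ccm_of_mem_nbr hadj, ?_⟩
    have h1 : (igraph X).dist w r ≤ q.length := SimpleGraph.dist_le q
    rw [← hp, SimpleGraph.Walk.length_cons]
    omega

end Aux

theorem stmt_10 {X : Type*} [Fintype X] [PartialOrder X] (n : ℕ)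
    (hn : Fintype.card X = n)
    (h2 : ∃ a b : X, a < b)
    (huniv : ∀ a b : X, a ≠ b → pline a b ≠ Set.univ) :
    n ≤ (plines X).ncard := by
  classical
  subst hn
  obtain ⟨ψ, hψinj, hψrep⟩ := exists_psi huniv h2
  have hpar : ∀ (v : X), v ≠ Quot.out (ccm v) → ∃ w, (igraph X).Adj v w ∧ ccm w = ccm v ∧
      (igraph X).dist w (Quot.out (ccm v)) < (igraph X).dist v (Quot.out (ccm v)) :=
    fun v h => exists_parent v _ h (SimpleGraph.ConnectedComponent.exact (ccm_out (ccm v)).symm)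
  choose par hadj hccp hdist using hpar
  set Φ : X → Set X := fun v =>
    if h : v = Quot.out (ccm v) then ψ (ccm v) else {v, par v h} with hΦ
  have hmem : ∀ v, Φ v ∈ plines X := by
    intro v
    rw [hΦ]
    dsimp only
    split
    · next h =>
      obtain ⟨a, b, hab, _, heq⟩ := hψrep (ccm v)
      exact ⟨a, b, hab, heq⟩
    · next h =>
      exact ⟨v, par v h, (hadj v h).1, (pline_of_not_pcomp (hadj v h).2).symm⟩
  have hroot : ∀ v : X, v = Quot.out (ccm v) → ∀ v' : X, v' = Quot.out (ccm v') →
      Φ v = Φ v' → v = v' := by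
    intro v hv v' hv' heq
    rw [hΦ] at heq
    dsimp only at heq
    rw [dif_pos hv, dif_pos hv'] at heq
    have := hψinj heq
    rw [hv, hv', this]
  have hmix : ∀ v : X, v = Quot.out (ccm v) → ∀ v' : X, v' ≠ Quot.out (ccm v') →
      Φ v ≠ Φ v' := by
    intro v hv v' hv' heq
    rw [hΦ] at heq
    dsimp only at heq
    rw [dif_pos hv, dif_neg hv'] at heq
    obtain ⟨a, b, hab, hcomp, hrep⟩ := hψrep (ccm v)
    rw [hrep] at heq
    have ha : a ∈ ({v', par v' hv'} : Set X) := by rw [← heq]; exact mem_pline_left a b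
    have hb : b ∈ ({v', par v' hv'} : Set X) := by rw [← heq]; exact mem_pline_right a b
    have hnc : ¬ pcomp v' (par v' hv') := (hadj v' hv').2
    simp only [Set.mem_insert_iff, Set.mem_singleton_iff] at ha hb
    rcases ha with rfl | rfl <;> rcases hb with rfl | rfl
    · exact hab rfl
    · exact hnc hcomp
    · exact hnc (pcomp_symm hcomp)
    · exact hab rfl
  have hinj : Function.Injective Φ := by
    intro v v' heq
    by_cases hv : v = Quot.out (ccm v) <;> by_cases hv' : v' = Quot.out (ccm v')
    · exact hroot v hv v' hv' heq
    · exact absurd heq (hmix v hv v' hv')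
    · exact absurd heq.symm (hmix v' hv' v hv)
    · -- both non-roots
      by_contra hne
      have heq' : ({v, par v hv} : Set X) = {v', par v' hv'} := by
        rw [hΦ] at heq
        dsimp only at heq
        rwa [dif_neg hv, dif_neg hv'] at heq
      have h1 : v ∈ ({v', par v' hv'} : Set X) := by rw [← heq']; exact Set.mem_insert _ _
      have h2' : v' ∈ ({v, par v hv} : Set X) := by rw [heq']; exact Set.mem_insert _ _
      simp only [Set.mem_insert_iff, Set.mem_singleton_iff] at h1 h2'
      rcases h1 with h1 | h1
      · exact hne h1
      rcases h2' with h2' | h2'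
      · exact hne h2'.symm
      -- v = par v' hv', v' = par v hv
      have e1 : ccm v' = ccm v := by rw [h2']; exact hccp v hv
      have d1 : (igraph X).dist v' (Quot.out (ccm v)) < (igraph X).dist v (Quot.out (ccm v)) := by
        rw [h2']; exact hdist v hv
      have d2 : (igraph X).dist v (Quot.out (ccm v')) <
          (igraph X).dist v' (Quot.out (ccm v')) := by
        rw [h1]; exact hdist v' hv'
      rw [e1] at d2
      omega
  have hF : Function.Injective (fun v : X => (⟨Φ v, hmem v⟩ : ↥(plines X))) :=
    fun v v' h => hinj (congrArg Subtype.val h)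
  calc Fintype.card X = Nat.card X := Nat.card_eq_fintype_card.symm
    _ ≤ Nat.card ↥(plines X) := Nat.card_le_card_of_injective _ hF
    _ = (plines X).ncard := Nat.card_coe_set_eq _
end

section
/- If P is a finite poset on n elements with no universal line and height h(P) satisfying h(P) ≤ c·n^s for constants c > 0 and 0 < s ≤ 1, then the number of distinct lines in P is at least c'·n^{2−s} for some constant c' > 0 depending only on c (for n sufficiently large). -/
open Classical

section Aux

open scoped Classical

variable {X : Type} [Fintype X] [PartialOrder X]

/-- ordered incomparable pairs -/
noncomputable def Opairs (X : Type) [Fintype X] [PartialOrder X] : Finset (X × X) :=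
  Finset.univ.filter (fun p => p.1 ≠ p.2 ∧ ¬ pcomp p.1 p.2)

lemma mem_Opairs {p : X × X} : p ∈ Opairs X ↔ p.1 ≠ p.2 ∧ ¬ pcomp p.1 p.2 := by
  simp [Opairs]

lemma lemA : (Opairs X).card ≤ 2 * (plines X).ncard := by
  classical
  set f : X × X → Set X := fun p => {p.1, p.2} with hf
  have h1 : (Opairs X).card ≤ 2 * ((Opairs X).image f).card := by
    apply Finset.card_le_mul_card_image
    intro t ht
    rcases Finset.mem_image.mp ht with ⟨p, hp, hpt⟩
    have hsub : ((Opairs X).filter (fun q => f q = t)) ⊆ {(p.1, p.2), (p.2, p.1)} := by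
      intro q hq
      simp only [Finset.mem_filter] at hq
      obtain ⟨hqO, hqt⟩ := hq
      have hq12 : q.1 ≠ q.2 := (mem_Opairs.mp hqO).1
      have hset : ({q.1, q.2} : Set X) = {p.1, p.2} := by
        rw [show ({q.1, q.2} : Set X) = f q from rfl, hqt, ← hpt]
      have hq1 : q.1 = p.1 ∨ q.1 = p.2 := by
        have : q.1 ∈ ({p.1, p.2} : Set X) := by rw [← hset]; left; rfl
        simpa using this
      have hq2 : q.2 = p.1 ∨ q.2 = p.2 := by
        have : q.2 ∈ ({p.1, p.2} : Set X) := by rw [← hset]; right; rfl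
        simpa using this
      simp only [Finset.mem_insert, Finset.mem_singleton]
      rcases hq1 with h1 | h1 <;> rcases hq2 with h2 | h2
      · exact absurd (h1.trans h2.symm) hq12
      · left; exact Prod.ext h1 h2
      · right; exact Prod.ext h1 h2
      · exact absurd (h1.trans h2.symm) hq12
    calc ((Opairs X).filter (fun q => f q = t)).card
        ≤ ({(p.1, p.2), (p.2, p.1)} : Finset (X × X)).card := Finset.card_le_card hsub
      _ ≤ 2 := (Finset.card_insert_le _ _).trans (by simp)
  refine h1.trans (Nat.mul_le_mul_left 2 ?_)
  have hfin : (plines X).Finite := Set.toFinite _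
  rw [Set.ncard_eq_toFinset_card (plines X) hfin]
  apply Finset.card_le_card
  intro t ht
  rcases Finset.mem_image.mp ht with ⟨p, hp, hpt⟩
  obtain ⟨hne, hnc⟩ := mem_Opairs.mp hp
  rw [Set.Finite.mem_toFinset]
  exact ⟨p.1, p.2, hne, by rw [← hpt, pline, if_neg hnc]⟩

lemma lemB (hu : ∀ a b : X, a ≠ b → pline a b ≠ Set.univ) :
    Fintype.card X ≤ (Opairs X).card + 1 := by
  classical
  set G : Finset X := Finset.univ.filter (fun x => ∃ y, y ≠ x ∧ ¬ pcomp x y) with hGdef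
  have hcompl : ∀ a : X, a ∉ G → ∀ y, y ≠ a → pcomp a y := by
    intro a ha y hy
    by_contra hcy
    exact ha (Finset.mem_filter.mpr ⟨Finset.mem_univ _, ⟨y, hy, hcy⟩⟩)
  have hGcompl : Gᶜ.card ≤ 1 := by
    rw [Finset.card_le_one]
    intro a ha b hb
    by_contra hab
    have haG : a ∉ G := Finset.mem_compl.mp ha
    have hbG : b ∉ G := Finset.mem_compl.mp hb
    have hA := hcompl a haG
    have hB := hcompl b hbG
    apply hu a b hab
    have hpab : pcomp a b := hA b (Ne.symm hab)
    rw [pline, if_pos hpab]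
    apply Set.eq_univ_of_forall
    intro x
    by_cases hxa : x = a
    · left; left; exact hxa
    · by_cases hxb : x = b
      · left; right; exact hxb
      · right
        exact ⟨(hA x hxa).symm, (hB x hxb).symm⟩
  have hG : G.card ≤ (Opairs X).card := by
    have hw : ∀ x ∈ G, ∃ y, y ≠ x ∧ ¬ pcomp x y := fun x hx => (Finset.mem_filter.mp hx).2
    choose! w hw1 hw2 using hw
    apply Finset.card_le_card_of_injOn (fun x => (x, w x))
    · intro x hx
      exact mem_Opairs.mpr ⟨Ne.symm (hw1 x hx), hw2 x hx⟩
    · intro x _ y _ hxy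
      exact congrArg Prod.fst hxy
  have := Finset.card_add_card_compl G
  omega

lemma lemC {h : ℕ} (hle : ∀ ch : Finset X, IsChain (· < ·) (ch : Set X) → ch.card ≤ h) :
    ((Fintype.card X : ℝ)) ^ 2 ≤ (h : ℝ) * (((Opairs X).card : ℝ) + (Fintype.card X : ℝ)) := by
  classical
  -- level function
  set ℓ : X → ℕ := fun x =>
    (Finset.univ.filter (fun ch : Finset X =>
      IsChain (· < ·) (ch : Set X) ∧ x ∈ ch ∧ ∀ y ∈ ch, y ≤ x)).sup Finset.card with hldef
  have hmem_single : ∀ x : X, ({x} : Finset X) ∈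
      (Finset.univ.filter (fun ch : Finset X =>
        IsChain (· < ·) (ch : Set X) ∧ x ∈ ch ∧ ∀ y ∈ ch, y ≤ x)) := by
    intro x
    refine Finset.mem_filter.mpr ⟨Finset.mem_univ _, ?_, ?_, ?_⟩
    · rw [Finset.coe_singleton]
      exact IsChain.singleton
    · exact Finset.mem_singleton_self x
    · intro y hy; rw [Finset.mem_singleton] at hy; exact le_of_eq hy
  have hl1 : ∀ x : X, 1 ≤ ℓ x := by
    intro x
    have := Finset.le_sup (f := Finset.card) (hmem_single x)
    rwa [Finset.card_singleton] at this
  have hlh : ∀ x : X, ℓ x ≤ h := by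
    intro x
    apply Finset.sup_le
    intro ch hch
    exact hle ch (Finset.mem_filter.mp hch).2.1
  have hmono : ∀ x y : X, x < y → ℓ x < ℓ y := by
    intro x y hxy
    obtain ⟨ch, hch, hsup⟩ := Finset.exists_mem_eq_sup _ ⟨{x}, hmem_single x⟩ Finset.card
    obtain ⟨-, hchain, hxch, hble⟩ := Finset.mem_filter.mp hch
    have hynotin : y ∉ ch := fun hy => absurd hxy ((hble y hy).not_gt)
    have hins : (insert y ch : Finset X) ∈
        (Finset.univ.filter (fun c : Finset X =>
          IsChain (· < ·) (c : Set X) ∧ y ∈ c ∧ ∀ z ∈ c, z ≤ y)) := by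
      refine Finset.mem_filter.mpr ⟨Finset.mem_univ _, ?_, ?_, ?_⟩
      · rw [Finset.coe_insert]
        exact hchain.insert (fun b hb _ => Or.inr (lt_of_le_of_lt (hble b hb) hxy))
      · exact Finset.mem_insert_self y ch
      · intro z hz
        rcases Finset.mem_insert.mp hz with hz | hz
        · exact le_of_eq hz
        · exact le_of_lt (lt_of_le_of_lt (hble z hz) hxy)
    have hins2 : (insert y ch).card ≤ ℓ y := Finset.le_sup (f := Finset.card) hins
    rw [Finset.card_insert_of_notMem hynotin] at hins2
    have hx : ℓ x = ch.card := hsup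
    omega
  -- fibers of ℓ
  set fib : ℕ → Finset X := fun i => Finset.univ.filter (fun x => ℓ x = i) with hfib
  set P : Finset (X × X) := Finset.univ.filter (fun p : X × X => ℓ p.1 = ℓ p.2) with hP
  have hmaps : ∀ p : X × X, p ∈ P → ℓ p.1 ∈ Finset.Icc 1 h := by
    intro p _
    exact Finset.mem_Icc.mpr ⟨hl1 _, hlh _⟩
  have hPcard : P.card = ∑ i ∈ Finset.Icc 1 h, ((fib i).card) ^ 2 := by
    rw [Finset.card_eq_sum_card_fiberwise hmaps]
    apply Finset.sum_congr rfl
    intro i _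
    have : P.filter (fun p => ℓ p.1 = i) = (fib i) ×ˢ (fib i) := by
      ext p
      simp only [hP, hfib, Finset.mem_filter, Finset.mem_univ, true_and,
        Finset.mem_product]
      constructor
      · rintro ⟨h1, h2⟩; exact ⟨h2, h2 ▸ h1.symm ▸ h1 ▸ rfl⟩
      · rintro ⟨h1, h2⟩; exact ⟨h1.trans h2.symm, h1⟩
    rw [this, Finset.card_product, sq]
  have hncard : Fintype.card X = ∑ i ∈ Finset.Icc 1 h, (fib i).card := by
    rw [← Finset.card_univ]
    apply Finset.card_eq_sum_card_fiberwise (f := ℓ)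
    intro x _
    exact Finset.mem_Icc.mpr ⟨hl1 _, hlh _⟩
  have hPle : P.card ≤ (Opairs X).card + Fintype.card X := by
    have hsplit := Finset.card_filter_add_card_filter_not
      (s := P) (p := fun p : X × X => p.1 = p.2)
    have hdiag : (P.filter (fun p : X × X => p.1 = p.2)).card ≤ Fintype.card X := by
      rw [← Finset.card_univ]
      apply Finset.card_le_card_of_injOn Prod.fst (fun p _ => Finset.mem_univ _)
      intro p hp q hq hpq
      simp only [Finset.mem_coe, Finset.mem_filter] at hp hq
      exact Prod.ext hpq (by rw [← hp.2, ← hq.2, hpq])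
    have hoff : (P.filter (fun p : X × X => ¬ p.1 = p.2)) ⊆ Opairs X := by
      intro p hp
      simp only [hP, Finset.mem_filter, Finset.mem_univ, true_and] at hp
      obtain ⟨hll, hne⟩ := hp
      refine mem_Opairs.mpr ⟨hne, ?_⟩
      rintro (hlt | hlt)
      · exact absurd hll (ne_of_lt (hmono _ _ hlt))
      · exact absurd hll.symm (ne_of_lt (hmono _ _ hlt))
    have := Finset.card_le_card hoff
    omega
  -- Cauchy–Schwarz over ℝ
  have hCS : ((Fintype.card X : ℝ)) ^ 2 ≤ (h : ℝ) * (P.card : ℝ) := by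
    have := sq_sum_le_card_mul_sum_sq
      (s := Finset.Icc 1 h) (f := fun i => ((fib i).card : ℝ))
    rw [Nat.card_Icc] at this
    calc ((Fintype.card X : ℝ)) ^ 2
        = (∑ i ∈ Finset.Icc 1 h, ((fib i).card : ℝ)) ^ 2 := by
          rw [hncard]; push_cast; ring
      _ ≤ ((h + 1 - 1 : ℕ) : ℝ) * ∑ i ∈ Finset.Icc 1 h, ((fib i).card : ℝ) ^ 2 := this
      _ = (h : ℝ) * (P.card : ℝ) := by
          rw [hPcard]; push_cast; ring_nf
  calc ((Fintype.card X : ℝ)) ^ 2 ≤ (h : ℝ) * (P.card : ℝ) := hCS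
    _ ≤ (h : ℝ) * (((Opairs X).card : ℝ) + (Fintype.card X : ℝ)) := by
        apply mul_le_mul_of_nonneg_left _ (Nat.cast_nonneg h)
        exact_mod_cast Nat.cast_le.mpr hPle

end Aux

theorem stmt_17 (c s : ℝ) (hc : 0 < c) (hs0 : 0 < s) (hs1 : s ≤ 1) :
    ∃ c' : ℝ, 0 < c' ∧ ∃ N : ℕ, ∀ (X : Type) [Fintype X] [PartialOrder X]
      (n h : ℕ), Fintype.card X = n → N ≤ n →
      (∃ ch : Finset X, IsChain (· < ·) (ch : Set X) ∧ ch.card = h) →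
      (∀ ch : Finset X, IsChain (· < ·) (ch : Set X) → ch.card ≤ h) →
      (h : ℝ) ≤ c * (n : ℝ) ^ s →
      (∀ a b : X, a ≠ b → pline a b ≠ Set.univ) →
      c' * (n : ℝ) ^ (2 - s) ≤ ((plines X).ncard : ℝ) := by
  refine ⟨1 / (8 * c), by positivity, 2, ?_⟩
  intro X _ _ n h hcard hn hex hle hhc hu
  have hn2 : (2 : ℝ) ≤ (n : ℝ) := by exact_mod_cast hn
  have hnpos : (0 : ℝ) < (n : ℝ) := by linarith
  have hXpos : 0 < Fintype.card X := by omega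
  have hh1 : 1 ≤ h := by
    obtain ⟨x0⟩ := Fintype.card_pos_iff.mp hXpos
    have := hle {x0} (by rw [Finset.coe_singleton]; exact IsChain.singleton)
    simpa using this
  have hh1R : (1 : ℝ) ≤ (h : ℝ) := by exact_mod_cast hh1
  have main : ∀ O L : ℝ, 0 ≤ O → 0 ≤ L → O ≤ 2 * L → (n : ℝ) ≤ O + 1 →
      (n : ℝ) ^ 2 ≤ (h : ℝ) * (O + (n : ℝ)) →
      1 / (8 * c) * (n : ℝ) ^ (2 - s) ≤ L := by
    intro O L hO0 hL0 f1 f2 f3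
    set p : ℝ := (n : ℝ) ^ s with hpdef
    set q : ℝ := (n : ℝ) ^ (2 - s) with hqdef
    have hp0 : 0 < p := Real.rpow_pos_of_pos hnpos s
    have hq0 : 0 < q := Real.rpow_pos_of_pos hnpos _
    have hpq : p * q = (n : ℝ) ^ 2 := by
      rw [hpdef, hqdef, ← Real.rpow_add hnpos, ← Real.rpow_natCast (n : ℝ) 2]
      norm_num
    have key : q ≤ 8 * c * L := by
      rcases le_or_gt (2 * (h : ℝ)) (n : ℝ) with hcase | hcase
      · have h1 : p * q / 2 ≤ (h : ℝ) * O := by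
          nlinarith [mul_le_mul_of_nonneg_right hcase (le_of_lt hnpos)]
        have h2 : p * q / 2 ≤ c * p * O := by
          nlinarith [mul_le_mul_of_nonneg_right hhc hO0]
        have h3 : q / 2 ≤ c * O := by
          have h4 : p * (q / 2) ≤ p * (c * O) := by nlinarith
          exact le_of_mul_le_mul_left h4 hp0
        nlinarith
      · have hn2h : (n : ℝ) < 2 * c * p := by nlinarith
        have hq2 : q < 2 * c * (n : ℝ) := by
          have h1 : q * (n : ℝ) < (2 * c * (n : ℝ)) * (n : ℝ) := by nlinarith
          exact lt_of_mul_lt_mul_right h1 (le_of_lt hnpos)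
        have hL4 : (n : ℝ) ≤ 4 * L := by linarith
        nlinarith
    rw [div_mul_eq_mul_div, one_mul, div_le_iff₀ (by positivity : (0 : ℝ) < 8 * c)]
    linarith
  apply main ((Opairs X).card : ℝ) (((plines X).ncard : ℝ))
  · exact Nat.cast_nonneg _
  · exact Nat.cast_nonneg _
  · exact_mod_cast lemA (X := X)
  · have := lemB hu
    rw [hcard] at this
    exact_mod_cast this
  · have := lemC hle
    rwa [hcard] at this
end
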